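/- If g is a finite-dimensional symplectic Lie algebra, then dim C_j(g) + dim C^j(g) ≤ dim g for all j ≥ 0, where C^j(g) is the lower central series (C⁰(g) = g, C^j(g) = [g, C^{j−1}(g)]) and C_j(g) is the upper central series (C₀(g) = 0, C_j(g) = {X ∈ g : [X,g] ⊆ C_{j−1}(g)}). -/

import Mathlib

/-- A symplectic form on a Lie algebra `g` over `K`: a `K`-bilinear form which is
alternating, nondegenerate and closed, i.e.
`θ ⁅X,Y⁆ Z + θ ⁅Y,Z⁆ X + θ ⁅Z,X⁆ Y = 0` for all `X Y Z`. -/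
def IsSymplecticForm (K : Type*) [RCLike K] (g : Type*) [LieRing g] [LieAlgebra K g]
    (θ : g → g → K) : Prop :=
  (∀ (a : K) (X Y Z : g), θ (a • X + Y) Z = a * θ X Z + θ Y Z) ∧
  (∀ (a : K) (X Y Z : g), θ X (a • Y + Z) = a * θ X Y + θ X Z) ∧
  (∀ X : g, θ X X = 0) ∧
  (∀ X : g, (∀ Y : g, θ X Y = 0) → X = 0) ∧
  (∀ X Y Z : g, θ ⁅X, Y⁆ Z + θ ⁅Y, Z⁆ X + θ ⁅Z, X⁆ Y = 0)

open LieSubmodule LieModule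

section aux
variable {K : Type*} [RCLike K] {g : Type*} [LieRing g] [LieAlgebra K g]

lemma aux0 (y : g) (b : ℕ) (x : g) (hx : x ∈ ucs b (⊥ : LieIdeal K g)) :
    ⁅y, x⁆ ∈ ucs (b - 1) (⊥ : LieIdeal K g) := by
  cases b with
  | zero =>
    simp only [ucs_zero, LieSubmodule.mem_bot] at hx
    simp [hx]
  | succ b =>
    rw [ucs_succ] at hx
    simpa using (LieSubmodule.mem_normalizer _ x).mp hx y

lemma aux1 (a : ℕ) : ∀ y ∈ lowerCentralSeries K g g a, ∀ (b : ℕ) (x : g),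
    x ∈ ucs b (⊥ : LieIdeal K g) → ⁅y, x⁆ ∈ ucs (b - (a + 1)) (⊥ : LieIdeal K g) := by
  induction a with
  | zero => intro y _ b x hx; exact aux0 y b x hx
  | succ a ih =>
    intro y hy b x hx
    rw [lowerCentralSeries_succ, ← LieSubmodule.mem_toSubmodule,
      lieIdeal_oper_eq_linear_span'] at hy
    induction hy using Submodule.span_induction with
    | mem z hz =>
      obtain ⟨u, -, n, hn, rfl⟩ := hz
      rw [lie_lie]
      apply sub_mem
      · have h1 := ih n hn b x hx
        have h2 := aux0 (K := K) u _ _ h1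
        rwa [(by omega : b - (a+1) - 1 = b - (a + 1 + 1))] at h2
      · have h1 := aux0 (K := K) u b x hx
        have h2 := ih n hn _ _ h1
        rwa [(by omega : b - 1 - (a+1) = b - (a + 1 + 1))] at h2
    | zero => simp
    | add z w _ _ hz hw => rw [add_lie]; exact add_mem hz hw
    | smul c z _ hz => rw [smul_lie]; exact Submodule.smul_mem _ c hz

end aux

section aux2
variable {K : Type*} [RCLike K] {g : Type*} [LieRing g] [LieAlgebra K g]
  (θ : g → g → K)
  (h1 : ∀ (a : K) (X Y Z : g), θ (a • X + Y) Z = a * θ X Z + θ Y Z)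
  (h2 : ∀ (a : K) (X Y Z : g), θ X (a • Y + Z) = a * θ X Y + θ X Z)
  (halt : ∀ X : g, θ X X = 0)
  (hcl : ∀ X Y Z : g, θ ⁅X, Y⁆ Z + θ ⁅Y, Z⁆ X + θ ⁅Z, X⁆ Y = 0)

include h1 in
lemma theta_zero_left (Z : g) : θ 0 Z = 0 := by
  have h := h1 1 0 0 Z
  simp only [one_smul, add_zero, one_mul] at h
  have h' : θ (0 : g) Z + 0 = θ (0 : g) Z + θ (0 : g) Z := by rw [add_zero]; exact h
  exact (add_left_cancel h').symm

include h2 in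
lemma theta_zero_right (Z : g) : θ Z 0 = 0 := by
  have h := h2 1 Z 0 0
  simp only [one_smul, add_zero, one_mul] at h
  have h' : θ Z (0 : g) + 0 = θ Z (0 : g) + θ Z (0 : g) := by rw [add_zero]; exact h
  exact (add_left_cancel h').symm

include h1 in
lemma theta_add_left (X Y Z : g) : θ (X + Y) Z = θ X Z + θ Y Z := by
  simpa using h1 1 X Y Z

include h2 in
lemma theta_add_right (X Y Z : g) : θ X (Y + Z) = θ X Y + θ X Z := by
  simpa using h2 1 X Y Z

include h1 in
lemma theta_smul_left (a : K) (X Z : g) : θ (a • X) Z = a * θ X Z := by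
  have h := h1 a X 0 Z
  rwa [add_zero, theta_zero_left θ h1, add_zero] at h

include h2 in
lemma theta_smul_right (a : K) (X Z : g) : θ X (a • Z) = a * θ X Z := by
  have h := h2 a X Z 0
  rwa [add_zero, theta_zero_right θ h2, add_zero] at h

include h1 h2 halt in
lemma theta_antisymm (X Y : g) : θ X Y = - θ Y X := by
  have h := halt (X + Y)
  rw [theta_add_left θ h1, theta_add_right θ h2, theta_add_right θ h2, halt, halt,
    zero_add, add_zero] at h
  exact eq_neg_of_add_eq_zero_left h

include h1 in
lemma theta_neg_left (X Z : g) : θ (-X) Z = - θ X Z := by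
  have := theta_smul_left θ h1 (-1 : K) X Z
  simpa using this

include h1 h2 halt hcl in
lemma orth_ucs_lcs (j : ℕ) : ∀ x ∈ ucs j (⊥ : LieIdeal K g),
    ∀ y ∈ lowerCentralSeries K g g j, θ x y = 0 := by
  induction j with
  | zero =>
    intro x hx y _
    simp only [ucs_zero, LieSubmodule.mem_bot] at hx
    subst hx; exact theta_zero_left θ h1 y
  | succ j ih =>
    intro x hx y hy
    rw [lowerCentralSeries_succ, ← LieSubmodule.mem_toSubmodule,
      lieIdeal_oper_eq_linear_span'] at hy
    induction hy using Submodule.span_induction with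
    | mem z hz =>
      obtain ⟨u, -, n, hn, rfl⟩ := hz
      have hb : ⁅n, x⁆ = (0 : g) := by
        have := aux1 j n hn (j + 1) x hx
        simpa using this
      have hux : ⁅u, x⁆ ∈ ucs j (⊥ : LieIdeal K g) := by simpa using aux0 u (j+1) x hx
      have hxu : θ ⁅x, u⁆ n = 0 := by
        rw [(by rw [lie_skew] : ⁅x, u⁆ = -⁅u, x⁆), theta_neg_left θ h1,
          ih _ hux _ hn, neg_zero]
      have hc := hcl u n x
      rw [hb, theta_zero_left θ h1, hxu, add_zero, add_zero] at hc
      rw [theta_antisymm θ h1 h2 halt, hc, neg_zero]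
    | zero => exact theta_zero_right θ h2 x
    | add z w _ _ hz hw => rw [theta_add_right θ h2, hz, hw, add_zero]
    | smul c z _ hz => rw [theta_smul_right θ h2, hz, mul_zero]
end aux2

theorem finrank_ucs_add_finrank_lcs_le_of_symplectic'
    (K : Type*) [RCLike K] (g : Type*) [LieRing g] [LieAlgebra K g] [FiniteDimensional K g]
    (θ : g → g → K)
    (hθ : (∀ (a : K) (X Y Z : g), θ (a • X + Y) Z = a * θ X Z + θ Y Z) ∧
      (∀ (a : K) (X Y Z : g), θ X (a • Y + Z) = a * θ X Y + θ X Z) ∧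
      (∀ X : g, θ X X = 0) ∧
      (∀ X : g, (∀ Y : g, θ X Y = 0) → X = 0) ∧
      (∀ X Y Z : g, θ ⁅X, Y⁆ Z + θ ⁅Y, Z⁆ X + θ ⁅Z, X⁆ Y = 0)) (j : ℕ) :
    Module.finrank K ↥(LieSubmodule.ucs j (⊥ : LieIdeal K g)) +
      Module.finrank K ↥(LieModule.lowerCentralSeries K g g j) ≤ Module.finrank K g := by
  obtain ⟨h1, h2, halt, hnd, hcl⟩ := hθ
  set B : LinearMap.BilinForm K g := LinearMap.mk₂ K θ
    (fun X Y Z => theta_add_left θ h1 X Y Z)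
    (fun a X Z => theta_smul_left θ h1 a X Z)
    (fun X Y Z => theta_add_right θ h2 X Y Z)
    (fun a X Z => theta_smul_right θ h2 a X Z) with hB
  have hBapp : ∀ X Y : g, B X Y = θ X Y := fun X Y => rfl
  have hrefl : B.IsRefl := by
    intro X Y hXY
    rw [hBapp] at hXY ⊢
    rw [theta_antisymm θ h1 h2 halt, hXY, neg_zero]
  have hndB : B.Nondegenerate :=
    (LinearMap.IsRefl.nondegenerate_iff_separatingLeft hrefl).mpr (fun X hX => hnd X hX)
  set W : Submodule K g := (LieModule.lowerCentralSeries K g g j : LieSubmodule K g g).toSubmodule with hW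
  have hle : ((LieSubmodule.ucs j (⊥ : LieIdeal K g)) : Submodule K g) ≤ B.orthogonal W := by
    intro x hx
    rw [LinearMap.BilinForm.mem_orthogonal_iff]
    intro n hn
    show B n x = 0
    rw [hBapp, theta_antisymm θ h1 h2 halt, orth_ucs_lcs θ h1 h2 halt hcl j x hx n hn, neg_zero]
  have hfin := Submodule.finrank_mono hle
  rw [LinearMap.BilinForm.finrank_orthogonal hndB W] at hfin
  have hWle : Module.finrank K W ≤ Module.finrank K g := Submodule.finrank_le W
  have e1 : Module.finrank K ↥(LieSubmodule.ucs j (⊥ : LieIdeal K g)) =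
      Module.finrank K ((LieSubmodule.ucs j (⊥ : LieIdeal K g)) : Submodule K g) := rfl
  have e2 : Module.finrank K ↥(LieModule.lowerCentralSeries K g g j) =
      Module.finrank K W := rfl
  omega

/-- If `g` is a finite-dimensional symplectic Lie algebra then
`dim C_j(g) + dim C^j(g) ≤ dim g` for all `j ≥ 0`, where `C^j(g)` is the lower central
series and `C_j(g)` is the upper central series. -/
theorem finrank_ucs_add_finrank_lcs_le_of_symplectic
    (K : Type*) [RCLike K] (g : Type*) [LieRing g] [LieAlgebra K g] [FiniteDimensional K g]
    (θ : g → g → K) (hθ : IsSymplecticForm K g θ) (j : ℕ) :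
    Module.finrank K ↥(LieSubmodule.ucs j (⊥ : LieIdeal K g)) +
      Module.finrank K ↥(LieModule.lowerCentralSeries K g g j) ≤ Module.finrank K g := by
  exact finrank_ucs_add_finrank_lcs_le_of_symplectic' K g θ hθ j
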